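/- If f ∈ Homeo_+[0,1] satisfies conditions (1)–(3) — namely: (1) the linear order of connected components of [0,1] ∖ Fix(f) is dense and has no least or greatest element, (2) Fix(f) is totally disconnected, and (3) the positive components and the negative components each form a subset of this linear order that is dense in it and unbounded in both directions — then for every integer d ≥ 1 the homeomorphism ⊕^d(f) also satisfies conditions (1)–(3). -/

import Mathlib

open unitInterval

noncomputable section

/-- The group of orientation-preserving homeomorphisms of `[0,1]`:
increasing homeomorphisms of the unit interval. -/
def OPH : Type := {f : I ≃ₜ I // Monotone f}

/-- `Homeo₊[0,1]` with the supremum metric `d_sup(f,g) = sup_x |f x - g x|`,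
obtained by inducing the metric from `C(I,I)` (whose distance is the sup-distance). -/
noncomputable instance : MetricSpace OPH :=
  MetricSpace.induced (fun f => (⟨(f.1 : I → I), f.1.continuous⟩ : C(I, I)))
    (fun f g h => Subtype.ext (Homeomorph.ext fun x => by
      simpa using ContinuousMap.congr_fun h x))
    inferInstance

/-- The identity of `Homeo₊[0,1]`. -/
def OPH.id : OPH := ⟨Homeomorph.refl I, fun _ _ h => h⟩

/-- `f ↦ f̃` where `f̃ (x) = 1 - f (1 - x)`. -/
def OPH.tilde (f : OPH) : OPH :=
  ⟨symmHomeomorph.trans (f.1.trans symmHomeomorph), by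
    intro x y hxy
    have h1 : σ y ≤ σ x := symm_le_symm.mpr hxy
    have h2 : f.1 (σ y) ≤ f.1 (σ x) := f.2 h1
    exact symm_le_symm.mpr h2⟩



/-- The standard degree-`d` tent map, as a function on `ℝ`.  For
`x ∈ [m/d, (m+1)/d]` it equals `d*x - m` if `m` is even and `1 + m - d*x` if `m` is odd. -/
noncomputable def tentFun (d : ℕ) (x : ℝ) : ℝ :=
  if Even ⌊(d : ℝ) * x⌋ then (d : ℝ) * x - ⌊(d : ℝ) * x⌋ else 1 + ⌊(d : ℝ) * x⌋ - (d : ℝ) * x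

/-- The standard degree-`d` tent map `T_d : [0,1] → [0,1]`. -/
noncomputable def tentI (d : ℕ) (x : I) : I :=
  ⟨tentFun d x, by
    have h0 : ((⌊(d : ℝ) * x⌋ : ℤ) : ℝ) ≤ (d : ℝ) * x := Int.floor_le _
    have h1 : ((d : ℝ) * x : ℝ) < ⌊(d : ℝ) * x⌋ + 1 := Int.lt_floor_add_one _
    unfold tentFun
    rw [Set.mem_Icc]
    split_ifs <;> constructor <;> linarith⟩

/-- The defining property of the homeomorphism `⊕^d(g)` of `[0,1]`:
`G = ⊕^d(g)` iff for every `i < d` and `x ∈ [i/d, (i+1)/d]`,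
`G x = (1/d) * g_i (d*x - i) + i/d`, where `g_i = g` for even `i` and `g_i = g̃`
(with `g̃ (x) = 1 - g (1-x)`) for odd `i`. -/
def OplusProp (g : OPH) (d : ℕ) (G : I → I) : Prop :=
  ∀ i : ℕ, i < d → ∀ x : I, (i : ℝ) / d ≤ (x : ℝ) → (x : ℝ) ≤ ((i : ℝ) + 1) / d →
    ∀ hx : (d : ℝ) * (x : ℝ) - (i : ℝ) ∈ unitInterval,
      (G x : ℝ) =
        (1 / d) * ((if Even i then g.1 else (OPH.tilde g).1) ⟨(d : ℝ) * (x : ℝ) - (i : ℝ), hx⟩ : ℝ)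
          + (i : ℝ) / d

/-- The set of connected components of `[0,1] ∖ Fix(f)` for `f ∈ Homeo₊[0,1]`. -/
def Comps (f : OPH) : Set (Set I) :=
  {S | ∃ x : I, f.1 x ≠ x ∧ S = connectedComponentIn {y : I | f.1 y ≠ y} x}

/-- `S` lies entirely to the left of `T` in `[0,1]`: the strict order on the components of
`[0,1] ∖ Fix(f)` induced by their position in `[0,1]`. -/
def CompLT (S T : Set I) : Prop := ∀ x ∈ S, ∀ y ∈ T, x < y

/-- `S` is a positive interval of `f`: `f x > x` on `S`. -/
def PosComp (f : OPH) (S : Set I) : Prop := ∀ x ∈ S, x < f.1 x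

/-- `S` is a negative interval of `f`: `f x < x` on `S`. -/
def NegComp (f : OPH) (S : Set I) : Prop := ∀ x ∈ S, f.1 x < x

/-- Conditions (1)–(3) for `f ∈ Homeo₊[0,1]`:
(1) the linear order of components of `[0,1] ∖ Fix(f)` is dense without least or greatest
element; (2) `Fix(f)` is totally disconnected; (3) the positive components and the negative
components are each dense and unbounded in both directions in this linear order. -/
def GenericCond (f : OPH) : Prop :=
  (∀ S ∈ Comps f, ∀ T ∈ Comps f, CompLT S T → ∃ U ∈ Comps f, CompLT S U ∧ CompLT U T) ∧
  (∀ S ∈ Comps f, ∃ T ∈ Comps f, CompLT T S) ∧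
  (∀ S ∈ Comps f, ∃ T ∈ Comps f, CompLT S T) ∧
  IsTotallyDisconnected {x : I | f.1 x = x} ∧
  (∀ S ∈ Comps f, ∀ T ∈ Comps f, CompLT S T →
    ∃ U ∈ Comps f, PosComp f U ∧ CompLT S U ∧ CompLT U T) ∧
  (∀ S ∈ Comps f, ∃ T ∈ Comps f, PosComp f T ∧ CompLT T S) ∧
  (∀ S ∈ Comps f, ∃ T ∈ Comps f, PosComp f T ∧ CompLT S T) ∧
  (∀ S ∈ Comps f, ∀ T ∈ Comps f, CompLT S T →
    ∃ U ∈ Comps f, NegComp f U ∧ CompLT S U ∧ CompLT U T) ∧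
  (∀ S ∈ Comps f, ∃ T ∈ Comps f, NegComp f T ∧ CompLT T S) ∧
  (∀ S ∈ Comps f, ∃ T ∈ Comps f, NegComp f T ∧ CompLT S T)

open Set

lemma OPH.map_zero (g : OPH) : g.1 (0 : I) = 0 := by
  obtain ⟨y, hy⟩ := g.1.surjective 0
  have h0 : (0 : I) ≤ y := y.2.1
  have h1 := g.2 h0
  rw [hy] at h1
  exact le_antisymm h1 (g.1 0).2.1

lemma OPH.map_one (g : OPH) : g.1 (1 : I) = 1 := by
  obtain ⟨y, hy⟩ := g.1.surjective 1
  have h0 : y ≤ (1 : I) := y.2.2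
  have h1 := g.2 h0
  rw [hy] at h1
  exact le_antisymm (g.1 1).2.2 h1

lemma OPH.ne_bounds {g : OPH} {y : I} (hy : g.1 y ≠ y) : 0 < (y:ℝ) ∧ (y:ℝ) < 1 := by
  have h0 : y ≠ 0 := by rintro rfl; exact hy (OPH.map_zero g)
  have h1 : y ≠ 1 := by rintro rfl; exact hy (OPH.map_one g)
  exact ⟨lt_of_le_of_ne y.2.1 fun h => h0 (Subtype.ext h.symm),
    lt_of_le_of_ne y.2.2 fun h => h1 (Subtype.ext h)⟩

section Phi

def phiMap (d i : ℕ) (y : I) : I := Set.projIcc 0 1 zero_le_one (((y:ℝ) + i) / d)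

def psiMap (d i : ℕ) (x : I) : I := Set.projIcc 0 1 zero_le_one ((d:ℝ) * x - i)

/-- `x` lies in the `i`-th slab `[i/d, (i+1)/d]`. -/
def Slab (d i : ℕ) (x : I) : Prop := (i:ℝ)/d ≤ (x:ℝ) ∧ (x:ℝ) ≤ ((i:ℝ)+1)/d

variable {d i : ℕ}

lemma dpos (hid : i < d) : (0:ℝ) < d := by exact_mod_cast Nat.pos_of_ne_zero (by omega)

lemma phi_mem (hid : i < d) (y : I) : ((y:ℝ) + i)/d ∈ Set.Icc (0:ℝ) 1 := by
  have hd0 := dpos hid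
  have hi1 : (i:ℝ) + 1 ≤ d := by exact_mod_cast hid
  constructor
  · exact div_nonneg (add_nonneg y.2.1 (Nat.cast_nonneg i)) hd0.le
  · rw [div_le_one hd0]; have := y.2.2; linarith

lemma coe_phi (hid : i < d) (y : I) : (phiMap d i y : ℝ) = ((y:ℝ) + i)/d := by
  rw [phiMap, Set.projIcc_of_mem _ (phi_mem hid y)]

lemma phi_inj (hid : i < d) : Function.Injective (phiMap d i) := by
  intro y z h
  have hd0 := dpos hid
  have h2 : ((y:ℝ) + i)/d = ((z:ℝ) + i)/d := by
    rw [← coe_phi hid, ← coe_phi hid, h]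
  field_simp at h2
  exact Subtype.ext (by linarith)

lemma phi_lt_phi (hid : i < d) {y z : I} : phiMap d i y < phiMap d i z ↔ y < z := by
  rw [← Subtype.coe_lt_coe, ← Subtype.coe_lt_coe, coe_phi hid, coe_phi hid,
    div_lt_div_iff_of_pos_right (dpos hid), add_lt_add_iff_right]

lemma continuous_phi : Continuous (phiMap d i) :=
  continuous_projIcc.comp ((continuous_subtype_val.add continuous_const).div_const _)

lemma continuous_psi : Continuous (psiMap d i) :=
  continuous_projIcc.comp ((continuous_const.mul continuous_subtype_val).sub continuous_const)

lemma psi_mem (hid : i < d) {x : I} (hx : Slab d i x) : (d:ℝ) * x - i ∈ Set.Icc (0:ℝ) 1 := by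
  have hd0 := dpos hid
  have h1 : (i:ℝ) ≤ (x:ℝ) * d := (div_le_iff₀ hd0).mp hx.1
  have h2 : (x:ℝ) * d ≤ (i:ℝ) + 1 := (le_div_iff₀ hd0).mp hx.2
  constructor <;> nlinarith [mul_comm (d:ℝ) (x:ℝ)]

lemma coe_psi (hid : i < d) {x : I} (hx : Slab d i x) : (psiMap d i x : ℝ) = (d:ℝ) * x - i := by
  rw [psiMap, Set.projIcc_of_mem _ (psi_mem hid hx)]

lemma phi_slab (hid : i < d) (y : I) : Slab d i (phiMap d i y) := by
  have hd0 := dpos hid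
  rw [Slab, coe_phi hid]
  constructor
  · rw [div_le_div_iff_of_pos_right hd0]; linarith [y.2.1]
  · rw [div_le_div_iff_of_pos_right hd0]; linarith [y.2.2]

lemma phi_psi (hid : i < d) {x : I} (hx : Slab d i x) : phiMap d i (psiMap d i x) = x := by
  have hd0 := dpos hid
  apply Subtype.ext
  rw [coe_phi hid, coe_psi hid hx]
  field_simp
  ring

lemma psi_phi (hid : i < d) (y : I) : psiMap d i (phiMap d i y) = y := by
  have hd0 := dpos hid
  apply Subtype.ext
  rw [coe_psi hid (phi_slab hid y), coe_phi hid]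
  field_simp
  ring

lemma exists_slab (hd : 1 ≤ d) (x : I) : ∃ i, i < d ∧ Slab d i x := by
  have hd0 : (0:ℝ) < d := by exact_mod_cast Nat.pos_of_ne_zero (by omega)
  have hfl : (⌊(d:ℝ) * x⌋₊ : ℝ) ≤ (d:ℝ) * x := Nat.floor_le (mul_nonneg (Nat.cast_nonneg d) x.2.1)
  rcases le_or_gt (⌊(d:ℝ) * x⌋₊) (d-1) with h | h
  · refine ⟨⌊(d:ℝ) * x⌋₊, by omega, ?_, ?_⟩
    · rw [div_le_iff₀ hd0]; linarith [mul_comm (d:ℝ) (x:ℝ)]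
    · have h2 : (d:ℝ) * x < ⌊(d:ℝ) * x⌋₊ + 1 := Nat.lt_floor_add_one _
      rw [le_div_iff₀ hd0]; linarith [mul_comm (d:ℝ) (x:ℝ)]
  · refine ⟨d - 1, by omega, ?_, ?_⟩
    · have h1 : ((d-1:ℕ):ℝ) ≤ (⌊(d:ℝ) * x⌋₊ : ℝ) := by exact_mod_cast h.le
      rw [div_le_iff₀ hd0]; linarith [mul_comm (d:ℝ) (x:ℝ)]
    · have h1 : ((d-1:ℕ):ℝ) + 1 = (d:ℝ) := by
        have : ((d-1:ℕ):ℝ) = (d:ℝ) - 1 := by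
          push_cast [Nat.cast_sub hd]; ring
        rw [this]; ring
      rw [le_div_iff₀ hd0, h1]
      have := x.2.2
      nlinarith

end Phi

section Conj

/-- The `i`-th building block `g_i` of `⊕^d(g)`. -/
def gid (f : OPH) (i : ℕ) : OPH := if Even i then f else f.tilde

variable {f : OPH} {d i : ℕ} {F : OPH}

lemma conj (hF : OplusProp f d F.1) (hid : i < d) (y : I) :
    F.1 (phiMap d i y) = phiMap d i ((gid f i).1 y) := by
  have hs := phi_slab hid y
  have hx : (d:ℝ) * (phiMap d i y : ℝ) - i ∈ unitInterval := psi_mem hid hs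
  have h := hF i hid _ hs.1 hs.2 hx
  have harg : (⟨(d:ℝ) * (phiMap d i y : ℝ) - i, hx⟩ : I) = y := by
    apply Subtype.ext
    show (d:ℝ) * _ - _ = _
    rw [coe_phi hid]
    have hd0 := dpos hid
    field_simp
    ring
  have hg : (gid f i).1 = (if Even i then f.1 else (OPH.tilde f).1) := by
    unfold gid; split_ifs <;> rfl
  rw [harg, ← hg] at h
  apply Subtype.ext
  rw [h, coe_phi hid]
  ring

lemma fix_iff (hF : OplusProp f d F.1) (hid : i < d) (y : I) :
    F.1 (phiMap d i y) = phiMap d i y ↔ (gid f i).1 y = y := by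
  rw [conj hF hid y]
  exact ⟨fun h => phi_inj hid h, fun h => by rw [h]⟩

end Conj

section Comp

variable {f : OPH} {d i : ℕ} {F : OPH}

lemma phi_fix_endpoints (hF : OplusProp f d F.1) (hid : i < d) :
    F.1 (phiMap d i 0) = phiMap d i 0 ∧ F.1 (phiMap d i 1) = phiMap d i 1 :=
  ⟨(fix_iff hF hid 0).mpr (OPH.map_zero _), (fix_iff hF hid 1).mpr (OPH.map_one _)⟩

lemma slab_of_memC (hF : OplusProp f d F.1) (hid : i < d) {y : I}
    (hy : (gid f i).1 y ≠ y) {z : I}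
    (hz : z ∈ connectedComponentIn {w : I | F.1 w ≠ w} (phiMap d i y)) : Slab d i z := by
  have hd0 := dpos hid
  set NF := {w : I | F.1 w ≠ w} with hNF
  have hyNF : phiMap d i y ∈ NF := fun h => hy ((fix_iff hF hid y).mp h)
  have hyC : phiMap d i y ∈ connectedComponentIn NF (phiMap d i y) := mem_connectedComponentIn hyNF
  have hord : (Subtype.val '' connectedComponentIn NF (phiMap d i y)).OrdConnected :=
    (isPreconnected_connectedComponentIn.image _ continuous_subtype_val.continuousOn).ordConnected
  have hyb := OPH.ne_bounds hy
  have hmid1 : (i:ℝ)/d < (phiMap d i y : ℝ) := by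
    rw [coe_phi hid, div_lt_div_iff_of_pos_right hd0]; linarith [hyb.1]
  have hmid2 : (phiMap d i y : ℝ) < ((i:ℝ)+1)/d := by
    rw [coe_phi hid, div_lt_div_iff_of_pos_right hd0]; linarith [hyb.2]
  constructor
  · by_contra hlt
    push_neg at hlt
    have hmem : (i:ℝ)/d ∈ Subtype.val '' connectedComponentIn NF (phiMap d i y) :=
      hord.out ⟨z, hz, rfl⟩ ⟨_, hyC, rfl⟩ ⟨hlt.le, hmid1.le⟩
    obtain ⟨c, hcC, hc⟩ := hmem
    have hc0 : c = phiMap d i 0 := by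
      apply Subtype.ext
      rw [hc, coe_phi hid]
      norm_num
    exact (connectedComponentIn_subset NF _ hcC) (hc0 ▸ (phi_fix_endpoints hF hid).1)
  · by_contra hlt
    push_neg at hlt
    have hmem : ((i:ℝ)+1)/d ∈ Subtype.val '' connectedComponentIn NF (phiMap d i y) :=
      hord.out ⟨_, hyC, rfl⟩ ⟨z, hz, rfl⟩ ⟨hmid2.le, hlt.le⟩
    obtain ⟨c, hcC, hc⟩ := hmem
    have hc1 : c = phiMap d i 1 := by
      apply Subtype.ext
      rw [hc, coe_phi hid]
      norm_num [add_comm]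
    exact (connectedComponentIn_subset NF _ hcC) (hc1 ▸ (phi_fix_endpoints hF hid).2)

lemma compIn_phi (hF : OplusProp f d F.1) (hid : i < d) {y : I} (hy : (gid f i).1 y ≠ y) :
    connectedComponentIn {w : I | F.1 w ≠ w} (phiMap d i y)
      = phiMap d i '' connectedComponentIn {w : I | (gid f i).1 w ≠ w} y := by
  set NG := {w : I | (gid f i).1 w ≠ w} with hNGdef
  set NF := {w : I | F.1 w ≠ w} with hNFdef
  have himg : phiMap d i '' connectedComponentIn NG y ⊆ NF := by
    rintro _ ⟨z, hz, rfl⟩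
    exact fun h => (connectedComponentIn_subset NG y hz) ((fix_iff hF hid z).mp h)
  apply Set.Subset.antisymm
  · intro x hxC
    have hslab : ∀ z ∈ connectedComponentIn NF (phiMap d i y), Slab d i z :=
      fun z hz => slab_of_memC hF hid hy hz
    refine ⟨psiMap d i x, ?_, phi_psi hid (hslab x hxC)⟩
    have hDconn : IsPreconnected (psiMap d i '' connectedComponentIn NF (phiMap d i y)) :=
      isPreconnected_connectedComponentIn.image _ continuous_psi.continuousOn
    have hDsub : psiMap d i '' connectedComponentIn NF (phiMap d i y) ⊆ NG := by
      rintro _ ⟨c, hc, rfl⟩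
      intro h
      have h2 : F.1 (phiMap d i (psiMap d i c)) = phiMap d i (psiMap d i c) :=
        (fix_iff hF hid _).mpr h
      rw [phi_psi hid (hslab c hc)] at h2
      exact (connectedComponentIn_subset NF _ hc) h2
    have hyD : y ∈ psiMap d i '' connectedComponentIn NF (phiMap d i y) :=
      ⟨phiMap d i y, mem_connectedComponentIn (fun h => hy ((fix_iff hF hid y).mp h)),
        psi_phi hid y⟩
    exact hDconn.subset_connectedComponentIn hyD hDsub ⟨x, hxC, rfl⟩
  · exact (isPreconnected_connectedComponentIn.image _ continuous_phi.continuousOn)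
      |>.subset_connectedComponentIn (Set.mem_image_of_mem _ (mem_connectedComponentIn hy)) himg

end Comp

section CompsF

variable {f : OPH} {d i j : ℕ} {F : OPH}

lemma comps_nonempty {g : OPH} {S : Set I} (h : S ∈ Comps g) : S.Nonempty := by
  obtain ⟨x, hx, rfl⟩ := h
  exact ⟨x, mem_connectedComponentIn hx⟩

lemma comps_subset {g : OPH} {S : Set I} (h : S ∈ Comps g) : S ⊆ {y : I | g.1 y ≠ y} := by
  obtain ⟨x, hx, rfl⟩ := h
  exact connectedComponentIn_subset _ _

lemma comps_F (hd : 1 ≤ d) (hF : OplusProp f d F.1) {S : Set I} :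
    S ∈ Comps F ↔ ∃ i, i < d ∧ ∃ A ∈ Comps (gid f i), S = phiMap d i '' A := by
  constructor
  · rintro ⟨x, hx, rfl⟩
    obtain ⟨i, hid, hs⟩ := exists_slab hd x
    have hxphi : x = phiMap d i (psiMap d i x) := (phi_psi hid hs).symm
    have hne : (gid f i).1 (psiMap d i x) ≠ psiMap d i x := by
      intro h
      exact hx (by rw [hxphi]; exact (fix_iff hF hid _).mpr h)
    refine ⟨i, hid, connectedComponentIn {w : I | (gid f i).1 w ≠ w} (psiMap d i x),
      ⟨psiMap d i x, hne, rfl⟩, ?_⟩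
    rw [← compIn_phi hF hid hne, ← hxphi]
  · rintro ⟨i, hid, A, ⟨y, hy, rfl⟩, rfl⟩
    exact ⟨phiMap d i y, fun h => hy ((fix_iff hF hid y).mp h), (compIn_phi hF hid hy).symm⟩

lemma memComps_phi (hd : 1 ≤ d) (hF : OplusProp f d F.1) (hid : i < d) {A : Set I}
    (hA : A ∈ Comps (gid f i)) : phiMap d i '' A ∈ Comps F :=
  (comps_F hd hF).mpr ⟨i, hid, A, hA, rfl⟩

lemma compLT_phi_iff (hid : i < d) {A B : Set I} :
    CompLT (phiMap d i '' A) (phiMap d i '' B) ↔ CompLT A B := by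
  constructor
  · intro h a ha b hb
    exact (phi_lt_phi hid).mp (h _ ⟨a, ha, rfl⟩ _ ⟨b, hb, rfl⟩)
  · rintro h _ ⟨a, ha, rfl⟩ _ ⟨b, hb, rfl⟩
    exact (phi_lt_phi hid).mpr (h a ha b hb)

lemma compLT_cross (hi : i < d) (hj : j < d) (hij : i < j) {A B : Set I}
    (hA : A ⊆ {y : I | (gid f i).1 y ≠ y}) (hB : B ⊆ {y : I | (gid f j).1 y ≠ y}) :
    CompLT (phiMap d i '' A) (phiMap d j '' B) := by
  have hd0 := dpos hi
  rintro _ ⟨a, ha, rfl⟩ _ ⟨b, hb, rfl⟩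
  rw [← Subtype.coe_lt_coe, coe_phi hi, coe_phi hj, div_lt_div_iff_of_pos_right hd0]
  have h1 := (OPH.ne_bounds (hA ha)).2
  have h2 := (OPH.ne_bounds (hB hb)).1
  have h3 : (i:ℝ) + 1 ≤ j := by exact_mod_cast hij
  linarith

lemma not_phi_lt_cross (hi : i < d) (hj : j < d) (hij : j < i) {a b : I} :
    ¬ phiMap d i a < phiMap d j b := by
  have hd0 := dpos hi
  rw [← Subtype.coe_lt_coe, coe_phi hi, coe_phi hj, div_lt_div_iff_of_pos_right hd0]
  have h3 : (j:ℝ) + 1 ≤ i := by exact_mod_cast hij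
  have := a.2.1
  have := b.2.2
  intro h
  linarith

lemma pos_phi (hF : OplusProp f d F.1) (hid : i < d) {A : Set I}
    (h : PosComp (gid f i) A) : PosComp F (phiMap d i '' A) := by
  rintro _ ⟨a, ha, rfl⟩
  rw [conj hF hid]
  exact (phi_lt_phi hid).mpr (h a ha)

lemma neg_phi (hF : OplusProp f d F.1) (hid : i < d) {A : Set I}
    (h : NegComp (gid f i) A) : NegComp F (phiMap d i '' A) := by
  rintro _ ⟨a, ha, rfl⟩
  rw [conj hF hid]
  exact (phi_lt_phi hid).mpr (h a ha)

end CompsF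

section Tilde

variable {f : OPH}

lemma tilde_apply (f : OPH) (x : I) : (OPH.tilde f).1 x = σ (f.1 (σ x)) := rfl

lemma N_tilde (f : OPH) :
    {x : I | (OPH.tilde f).1 x ≠ x} = σ '' {x : I | f.1 x ≠ x} := by
  ext x
  simp only [Set.mem_setOf_eq, Set.mem_image]
  constructor
  · intro h
    exact ⟨σ x, fun he => h (by rw [tilde_apply, he, symm_symm]), symm_symm x⟩
  · rintro ⟨z, hz, rfl⟩ h
    rw [tilde_apply, symm_symm] at h
    exact hz (symm_involutive.injective h)

lemma fix_tilde (f : OPH) :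
    {x : I | (OPH.tilde f).1 x = x} = σ '' {x : I | f.1 x = x} := by
  ext x
  simp only [Set.mem_setOf_eq, Set.mem_image]
  constructor
  · intro h
    refine ⟨σ x, ?_, symm_symm x⟩
    rw [tilde_apply] at h
    have := congrArg σ h
    rwa [symm_symm] at this
  · rintro ⟨z, hz, rfl⟩
    rw [tilde_apply, symm_symm, hz]

lemma sigma_image_connectedComponentIn {s : Set I} {x : I} (hx : x ∈ s) :
    σ '' connectedComponentIn s x = connectedComponentIn (σ '' s) (σ x) :=
  symmHomeomorph.image_connectedComponentIn hx

lemma comps_tilde {S : Set I} :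
    S ∈ Comps (OPH.tilde f) ↔ ∃ A ∈ Comps f, S = σ '' A := by
  constructor
  · rintro ⟨x, hx, rfl⟩
    have hfx : f.1 (σ x) ≠ σ x := fun he => hx (by rw [tilde_apply, he, symm_symm])
    refine ⟨connectedComponentIn {y : I | f.1 y ≠ y} (σ x), ⟨σ x, hfx, rfl⟩, ?_⟩
    rw [sigma_image_connectedComponentIn hfx, symm_symm, ← N_tilde]
  · rintro ⟨A, ⟨y, hy, rfl⟩, rfl⟩
    refine ⟨σ y, ?_, ?_⟩
    · rw [tilde_apply, symm_symm]
      exact fun h => hy (symm_involutive.injective h)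
    · rw [sigma_image_connectedComponentIn hy, ← N_tilde]

lemma compLT_sigma {A B : Set I} : CompLT (σ '' A) (σ '' B) ↔ CompLT B A := by
  constructor
  · intro h b hb a ha
    exact symm_lt_symm.mp (h _ ⟨a, ha, rfl⟩ _ ⟨b, hb, rfl⟩)
  · rintro h _ ⟨a, ha, rfl⟩ _ ⟨b, hb, rfl⟩
    exact symm_lt_symm.mpr (h b hb a ha)

lemma pos_sigma {A : Set I} (h : NegComp f A) : PosComp (OPH.tilde f) (σ '' A) := by
  rintro _ ⟨a, ha, rfl⟩
  rw [tilde_apply, symm_symm]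
  exact symm_lt_symm.mpr (h a ha)

lemma neg_sigma {A : Set I} (h : PosComp f A) : NegComp (OPH.tilde f) (σ '' A) := by
  rintro _ ⟨a, ha, rfl⟩
  rw [tilde_apply, symm_symm]
  exact symm_lt_symm.mpr (h a ha)

lemma totdisc_tilde (h : IsTotallyDisconnected {x : I | f.1 x = x}) :
    IsTotallyDisconnected {x : I | (OPH.tilde f).1 x = x} := by
  intro t hts htc x hx y hy
  have hsub : σ '' t ⊆ {x : I | f.1 x = x} := by
    rintro _ ⟨z, hz, rfl⟩
    obtain ⟨w, hw, hwz⟩ := (fix_tilde f ▸ hts) hz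
    rwa [← hwz, symm_symm]
  have hsing := h (σ '' t) hsub (htc.image σ continuous_symm.continuousOn)
  exact symm_involutive.injective
    (hsing (Set.mem_image_of_mem σ hx) (Set.mem_image_of_mem σ hy))

lemma generic_tilde (hf : GenericCond f) : GenericCond (OPH.tilde f) := by
  obtain ⟨h1, h2, h3, h4, h5, h6, h7, h8, h9, h10⟩ := hf
  refine ⟨?_, ?_, ?_, totdisc_tilde h4, ?_, ?_, ?_, ?_, ?_, ?_⟩
  · rintro S hS T hT hST
    obtain ⟨A, hA, rfl⟩ := comps_tilde.mp hS
    obtain ⟨B, hB, rfl⟩ := comps_tilde.mp hT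
    obtain ⟨U, hU, hBU, hUA⟩ := h1 B hB A hA (compLT_sigma.mp hST)
    exact ⟨σ '' U, comps_tilde.mpr ⟨U, hU, rfl⟩, compLT_sigma.mpr hUA, compLT_sigma.mpr hBU⟩
  · rintro S hS
    obtain ⟨A, hA, rfl⟩ := comps_tilde.mp hS
    obtain ⟨U, hU, hAU⟩ := h3 A hA
    exact ⟨σ '' U, comps_tilde.mpr ⟨U, hU, rfl⟩, compLT_sigma.mpr hAU⟩
  · rintro S hS
    obtain ⟨A, hA, rfl⟩ := comps_tilde.mp hS
    obtain ⟨U, hU, hUA⟩ := h2 A hA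
    exact ⟨σ '' U, comps_tilde.mpr ⟨U, hU, rfl⟩, compLT_sigma.mpr hUA⟩
  · rintro S hS T hT hST
    obtain ⟨A, hA, rfl⟩ := comps_tilde.mp hS
    obtain ⟨B, hB, rfl⟩ := comps_tilde.mp hT
    obtain ⟨U, hU, hUneg, hBU, hUA⟩ := h8 B hB A hA (compLT_sigma.mp hST)
    exact ⟨σ '' U, comps_tilde.mpr ⟨U, hU, rfl⟩, pos_sigma hUneg,
      compLT_sigma.mpr hUA, compLT_sigma.mpr hBU⟩
  · rintro S hS
    obtain ⟨A, hA, rfl⟩ := comps_tilde.mp hS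
    obtain ⟨U, hU, hUneg, hAU⟩ := h10 A hA
    exact ⟨σ '' U, comps_tilde.mpr ⟨U, hU, rfl⟩, pos_sigma hUneg, compLT_sigma.mpr hAU⟩
  · rintro S hS
    obtain ⟨A, hA, rfl⟩ := comps_tilde.mp hS
    obtain ⟨U, hU, hUneg, hUA⟩ := h9 A hA
    exact ⟨σ '' U, comps_tilde.mpr ⟨U, hU, rfl⟩, pos_sigma hUneg, compLT_sigma.mpr hUA⟩
  · rintro S hS T hT hST
    obtain ⟨A, hA, rfl⟩ := comps_tilde.mp hS
    obtain ⟨B, hB, rfl⟩ := comps_tilde.mp hT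
    obtain ⟨U, hU, hUpos, hBU, hUA⟩ := h5 B hB A hA (compLT_sigma.mp hST)
    exact ⟨σ '' U, comps_tilde.mpr ⟨U, hU, rfl⟩, neg_sigma hUpos,
      compLT_sigma.mpr hUA, compLT_sigma.mpr hBU⟩
  · rintro S hS
    obtain ⟨A, hA, rfl⟩ := comps_tilde.mp hS
    obtain ⟨U, hU, hUpos, hAU⟩ := h7 A hA
    exact ⟨σ '' U, comps_tilde.mpr ⟨U, hU, rfl⟩, neg_sigma hUpos, compLT_sigma.mpr hAU⟩
  · rintro S hS
    obtain ⟨A, hA, rfl⟩ := comps_tilde.mp hS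
    obtain ⟨U, hU, hUpos, hUA⟩ := h6 A hA
    exact ⟨σ '' U, comps_tilde.mpr ⟨U, hU, rfl⟩, neg_sigma hUpos, compLT_sigma.mpr hUA⟩

lemma generic_gid (hf : GenericCond f) (i : ℕ) : GenericCond (gid f i) := by
  unfold gid
  split_ifs
  · exact hf
  · exact generic_tilde hf

end Tilde

section Assembly

variable {f : OPH} {d : ℕ} {F : OPH}

lemma dense_aux (hd : 1 ≤ d) (hF : OplusProp f d F.1) (sel : OPH → Set I → Prop)
    (hsel : ∀ i, i < d → ∀ A : Set I, sel (gid f i) A → sel F (phiMap d i '' A))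
    (hgd : ∀ i, ∀ S ∈ Comps (gid f i), ∀ T ∈ Comps (gid f i), CompLT S T →
      ∃ U ∈ Comps (gid f i), sel (gid f i) U ∧ CompLT S U ∧ CompLT U T)
    (hgu : ∀ i, ∀ S ∈ Comps (gid f i), ∃ T ∈ Comps (gid f i), sel (gid f i) T ∧ CompLT S T) :
    ∀ S ∈ Comps F, ∀ T ∈ Comps F, CompLT S T →
      ∃ U ∈ Comps F, sel F U ∧ CompLT S U ∧ CompLT U T := by
  intro S hS T hT hST
  obtain ⟨i, hi, A, hA, rfl⟩ := (comps_F hd hF).mp hS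
  obtain ⟨j, hj, B, hB, rfl⟩ := (comps_F hd hF).mp hT
  obtain ⟨a, ha⟩ := comps_nonempty hA
  obtain ⟨b, hb⟩ := comps_nonempty hB
  have hab := hST _ ⟨a, ha, rfl⟩ _ ⟨b, hb, rfl⟩
  rcases lt_trichotomy i j with hij | rfl | hij
  · obtain ⟨U, hU, hsU, hAU⟩ := hgu i A hA
    exact ⟨phiMap d i '' U, memComps_phi hd hF hi hU, hsel i hi U hsU,
      (compLT_phi_iff hi).mpr hAU, compLT_cross hi hj hij (comps_subset hU) (comps_subset hB)⟩
  · have hAB : CompLT A B := fun a' ha' b' hb' =>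
      (phi_lt_phi hi).mp (hST _ ⟨a', ha', rfl⟩ _ ⟨b', hb', rfl⟩)
    obtain ⟨U, hU, hsU, hAU, hUB⟩ := hgd i A hA B hB hAB
    exact ⟨phiMap d i '' U, memComps_phi hd hF hi hU, hsel i hi U hsU,
      (compLT_phi_iff hi).mpr hAU, (compLT_phi_iff hi).mpr hUB⟩
  · exact absurd hab (not_phi_lt_cross hi hj hij)

lemma below_aux (hd : 1 ≤ d) (hF : OplusProp f d F.1) (sel : OPH → Set I → Prop)
    (hsel : ∀ i, i < d → ∀ A : Set I, sel (gid f i) A → sel F (phiMap d i '' A))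
    (hgb : ∀ i, ∀ S ∈ Comps (gid f i), ∃ T ∈ Comps (gid f i), sel (gid f i) T ∧ CompLT T S) :
    ∀ S ∈ Comps F, ∃ T ∈ Comps F, sel F T ∧ CompLT T S := by
  intro S hS
  obtain ⟨i, hi, A, hA, rfl⟩ := (comps_F hd hF).mp hS
  obtain ⟨U, hU, hsU, hUA⟩ := hgb i A hA
  exact ⟨phiMap d i '' U, memComps_phi hd hF hi hU, hsel i hi U hsU,
    (compLT_phi_iff hi).mpr hUA⟩

lemma above_aux (hd : 1 ≤ d) (hF : OplusProp f d F.1) (sel : OPH → Set I → Prop)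
    (hsel : ∀ i, i < d → ∀ A : Set I, sel (gid f i) A → sel F (phiMap d i '' A))
    (hga : ∀ i, ∀ S ∈ Comps (gid f i), ∃ T ∈ Comps (gid f i), sel (gid f i) T ∧ CompLT S T) :
    ∀ S ∈ Comps F, ∃ T ∈ Comps F, sel F T ∧ CompLT S T := by
  intro S hS
  obtain ⟨i, hi, A, hA, rfl⟩ := (comps_F hd hF).mp hS
  obtain ⟨U, hU, hsU, hAU⟩ := hga i A hA
  exact ⟨phiMap d i '' U, memComps_phi hd hF hi hU, hsel i hi U hsU,
    (compLT_phi_iff hi).mpr hAU⟩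

lemma totdisc_F (hf : GenericCond f) (hd : 1 ≤ d) (hF : OplusProp f d F.1) :
    IsTotallyDisconnected {x : I | F.1 x = x} := by
  have key : ∀ t ⊆ {x : I | F.1 x = x}, IsPreconnected t →
      ∀ x ∈ t, ∀ y ∈ t, (x:ℝ) < (y:ℝ) → False := by
    intro t hts htc x hx y hy hxy
    have hd0 : (0:ℝ) < d := by exact_mod_cast Nat.pos_of_ne_zero (by omega)
    have hx1 : (x:ℝ) < 1 := lt_of_lt_of_le hxy y.2.2
    set i := ⌊(d:ℝ) * x⌋₊ with hidef
    have hfl : (i : ℝ) ≤ (d:ℝ) * x := Nat.floor_le (mul_nonneg (Nat.cast_nonneg d) x.2.1)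
    have hfl2 : (d:ℝ) * x < (i:ℝ) + 1 := Nat.lt_floor_add_one _
    have hid : i < d := by
      have h1 : (d:ℝ) * x < (d:ℝ) := by nlinarith
      exact_mod_cast (Nat.floor_lt (mul_nonneg (Nat.cast_nonneg d) x.2.1)).mpr h1
    have hxi : (i:ℝ)/d ≤ (x:ℝ) := by
      rw [div_le_iff₀ hd0]; linarith [mul_comm (d:ℝ) (x:ℝ)]
    set b := min (y:ℝ) (((i:ℝ)+1)/d) with hbdef
    have hxb : (x:ℝ) < b := by
      apply lt_min hxy
      rw [lt_div_iff₀ hd0]; linarith [mul_comm (d:ℝ) (x:ℝ)]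
    have hbmem : Set.Icc (x:ℝ) b ⊆ Subtype.val '' t := by
      have hord : (Subtype.val '' t).OrdConnected :=
        (htc.image _ continuous_subtype_val.continuousOn).ordConnected
      intro c hc
      exact hord.out ⟨x, hx, rfl⟩ ⟨y, hy, rfl⟩ ⟨hc.1, le_trans hc.2 (min_le_left _ _)⟩
    have hsub01 : Set.Icc (x:ℝ) b ⊆ Set.Icc (0:ℝ) 1 := fun c hc =>
      ⟨le_trans x.2.1 hc.1, le_trans hc.2 (le_trans (min_le_left _ _) y.2.2)⟩
    set pr : ℝ → I := Set.projIcc 0 1 zero_le_one with hpr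
    set K : Set I := pr '' Set.Icc (x:ℝ) b with hK
    have hKt : K ⊆ t := by
      rintro _ ⟨c, hc, rfl⟩
      obtain ⟨z, hzt, hz⟩ := hbmem hc
      have : pr c = z := by
        rw [hpr, Set.projIcc_of_mem zero_le_one (hsub01 hc)]
        exact Subtype.ext hz.symm
      rwa [this]
    have hslabK : ∀ z ∈ K, Slab d i z := by
      rintro _ ⟨c, hc, rfl⟩
      have hcoe : ((pr c : I) : ℝ) = c := by
        rw [hpr, Set.projIcc_of_mem zero_le_one (hsub01 hc)]
      constructor
      · rw [hcoe]; exact le_trans hxi hc.1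
      · rw [hcoe]; exact le_trans hc.2 (min_le_right _ _)
    have hDsub : psiMap d i '' K ⊆ {z : I | (gid f i).1 z = z} := by
      rintro _ ⟨z, hzK, rfl⟩
      have hz : F.1 z = z := hts (hKt hzK)
      have h2 := fix_iff hF hid (psiMap d i z)
      rw [phi_psi hid (hslabK z hzK)] at h2
      exact h2.mp hz
    have hDconn : IsPreconnected (psiMap d i '' K) :=
      ((isPreconnected_Icc.image _ continuous_projIcc.continuousOn).image _
        continuous_psi.continuousOn)
    have hxK : pr (x:ℝ) ∈ K := ⟨(x:ℝ), ⟨le_refl _, hxb.le⟩, rfl⟩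
    have hbK : pr b ∈ K := ⟨b, ⟨hxb.le, le_refl _⟩, rfl⟩
    have hsing := ((generic_gid hf i).2.2.2.1) (psiMap d i '' K) hDsub hDconn
    have heq : psiMap d i (pr (x:ℝ)) = psiMap d i (pr b) :=
      hsing (Set.mem_image_of_mem _ hxK) (Set.mem_image_of_mem _ hbK)
    have hcx : ((psiMap d i (pr (x:ℝ)) : I) : ℝ) = (d:ℝ) * ((pr (x:ℝ) : I) : ℝ) - i :=
      coe_psi hid (hslabK _ hxK)
    have hcb : ((psiMap d i (pr b) : I) : ℝ) = (d:ℝ) * ((pr b : I) : ℝ) - i :=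
      coe_psi hid (hslabK _ hbK)
    have hprx : ((pr (x:ℝ) : I) : ℝ) = (x:ℝ) := by
      rw [hpr, Set.projIcc_of_mem zero_le_one (hsub01 ⟨le_refl _, hxb.le⟩)]
    have hprb : ((pr b : I) : ℝ) = b := by
      rw [hpr, Set.projIcc_of_mem zero_le_one (hsub01 ⟨hxb.le, le_refl _⟩)]
    have := congrArg (fun z : I => (z : ℝ)) heq
    rw [hcx, hcb, hprx, hprb] at this
    have : (x:ℝ) = b := by
      have hdne : (d:ℝ) ≠ 0 := ne_of_gt hd0
      field_simp at this
      exact mul_left_cancel₀ hdne (by linarith)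
    exact absurd this (ne_of_lt hxb)
  intro t hts htc x hx y hy
  by_contra hne
  rcases lt_trichotomy (x:ℝ) (y:ℝ) with h | h | h
  · exact key t hts htc x hx y hy h
  · exact hne (Subtype.ext h)
  · exact key t hts htc y hy x hx h

end Assembly

/-- If `f ∈ Homeo₊[0,1]` satisfies conditions (1)–(3), then so does `⊕^d(f)` for every
`d ≥ 1` (where `F = ⊕^d(f)` is characterized by the defining formula `OplusProp f d F`). -/
theorem genericCond_oplus (f : OPH) (hf : GenericCond f) (d : ℕ) (hd : 1 ≤ d)
    (F : OPH) (hF : OplusProp f d (F.1 : I → I)) : GenericCond F := by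
  have hgi := generic_gid hf
  refine ⟨?_, ?_, ?_, totdisc_F hf hd hF, ?_, ?_, ?_, ?_, ?_, ?_⟩
  · have H := dense_aux hd hF (fun _ _ => True) (fun _ _ _ _ => trivial)
      (fun i S hS T hT h => by
        obtain ⟨U, hU, h1, h2⟩ := (hgi i).1 S hS T hT h
        exact ⟨U, hU, trivial, h1, h2⟩)
      (fun i S hS => by
        obtain ⟨T, hT, h2⟩ := (hgi i).2.2.1 S hS
        exact ⟨T, hT, trivial, h2⟩)
    intro S hS T hT h
    obtain ⟨U, hU, -, h1, h2⟩ := H S hS T hT h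
    exact ⟨U, hU, h1, h2⟩
  · have H := below_aux hd hF (fun _ _ => True) (fun _ _ _ _ => trivial)
      (fun i S hS => by
        obtain ⟨T, hT, h2⟩ := (hgi i).2.1 S hS
        exact ⟨T, hT, trivial, h2⟩)
    intro S hS
    obtain ⟨T, hT, -, h2⟩ := H S hS
    exact ⟨T, hT, h2⟩
  · have H := above_aux hd hF (fun _ _ => True) (fun _ _ _ _ => trivial)
      (fun i S hS => by
        obtain ⟨T, hT, h2⟩ := (hgi i).2.2.1 S hS
        exact ⟨T, hT, trivial, h2⟩)
    intro S hS
    obtain ⟨T, hT, -, h2⟩ := H S hS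
    exact ⟨T, hT, h2⟩
  · exact dense_aux hd hF PosComp (fun i hi A h => pos_phi hF hi h)
      (fun i => (hgi i).2.2.2.2.1) (fun i => (hgi i).2.2.2.2.2.2.1)
  · exact below_aux hd hF PosComp (fun i hi A h => pos_phi hF hi h)
      (fun i => (hgi i).2.2.2.2.2.1)
  · exact above_aux hd hF PosComp (fun i hi A h => pos_phi hF hi h)
      (fun i => (hgi i).2.2.2.2.2.2.1)
  · exact dense_aux hd hF NegComp (fun i hi A h => neg_phi hF hi h)
      (fun i => (hgi i).2.2.2.2.2.2.2.1) (fun i => (hgi i).2.2.2.2.2.2.2.2.2)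
  · exact below_aux hd hF NegComp (fun i hi A h => neg_phi hF hi h)
      (fun i => (hgi i).2.2.2.2.2.2.2.2.1)
  · exact above_aux hd hF NegComp (fun i hi A h => neg_phi hF hi h)
      (fun i => (hgi i).2.2.2.2.2.2.2.2.2)

end
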